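/- arXiv:1709.09331 — 2 statements merged into one kernel-verified Lean document; each statement's English description precedes it below -/
import Mathlib

section
/- Let P be a finite poset with n elements and let (x_1, x_2, …, x_n) be any linear extension of P. Then order ideal rowmotion satisfies Row_J = t_{x_1} ∘ t_{x_2} ∘ ⋯ ∘ t_{x_n} (compositions applied right to left). -/
open scoped Classical

variable {P : Type*} [PartialOrder P]

abbrev OrderIdealSub (P : Type*) [PartialOrder P] : Type _ := {I : Set P // IsLowerSet I}

abbrev AntichainSub (P : Type*) [PartialOrder P] : Type _ := {A : Set P // IsAntichain (· ≤ ·) A}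

noncomputable def togFun (e : P) (I : OrderIdealSub P) : OrderIdealSub P :=
  if _h : e ∈ I.1 then
    if h2 : IsLowerSet (I.1 \ {e}) then ⟨I.1 \ {e}, h2⟩ else I
  else
    if h2 : IsLowerSet (insert e I.1) then ⟨insert e I.1, h2⟩ else I

noncomputable def atogFun (e : P) (A : AntichainSub P) : AntichainSub P :=
  if _h : e ∈ A.1 then ⟨A.1 \ {e}, A.2.subset Set.diff_subset⟩
  else if h2 : IsAntichain (· ≤ ·) (insert e A.1) then ⟨insert e A.1, h2⟩
  else A

def idealOf (A : AntichainSub P) : OrderIdealSub P :=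
  ⟨{x | ∃ y ∈ A.1, x ≤ y}, fun _a _b hba ha => by
    obtain ⟨y, hy, h⟩ := ha
    exact ⟨y, hy, hba.trans h⟩⟩

def listComp {α : Type*} (fs : List (α → α)) : α → α := fs.foldr (· ∘ ·) id

theorem togFun_involutive (e : P) : Function.Involutive (togFun (P := P) e) := by
  intro I
  unfold togFun
  by_cases h : e ∈ I.1
  · rw [dif_pos h]
    by_cases h2 : IsLowerSet (I.1 \ {e})
    · rw [dif_pos h2]
      have hne : e ∉ (⟨I.1 \ {e}, h2⟩ : OrderIdealSub P).1 := fun hc => hc.2 rfl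
      rw [dif_neg hne]
      have hins : insert e (I.1 \ {e}) = I.1 := by
        rw [Set.insert_diff_singleton, Set.insert_eq_self.mpr h]
      have h3 : IsLowerSet (insert e ((⟨I.1 \ {e}, h2⟩ : OrderIdealSub P)).1) := by
        show IsLowerSet (insert e (I.1 \ {e})); rw [hins]; exact I.2
      rw [dif_pos h3]
      exact Subtype.ext hins
    · rw [dif_neg h2, dif_pos h, dif_neg h2]
  · rw [dif_neg h]
    by_cases h2 : IsLowerSet (insert e I.1)
    · rw [dif_pos h2]
      have hme : e ∈ (⟨insert e I.1, h2⟩ : OrderIdealSub P).1 := Set.mem_insert e I.1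
      rw [dif_pos hme]
      have hdel : (insert e I.1) \ {e} = I.1 := by
        rw [Set.insert_diff_self_of_notMem h]
      have h3 : IsLowerSet ((⟨insert e I.1, h2⟩ : OrderIdealSub P).1 \ {e}) := by
        show IsLowerSet ((insert e I.1) \ {e}); rw [hdel]; exact I.2
      rw [dif_pos h3]
      exact Subtype.ext hdel
    · rw [dif_neg h2, dif_neg h, dif_neg h2]

theorem atogFun_involutive (e : P) : Function.Involutive (atogFun (P := P) e) := by
  intro A
  unfold atogFun
  by_cases h : e ∈ A.1
  · rw [dif_pos h]
    have hne : e ∉ (⟨A.1 \ {e}, A.2.subset Set.diff_subset⟩ : AntichainSub P).1 :=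
      fun hc => hc.2 rfl
    rw [dif_neg hne]
    have hins : insert e (A.1 \ {e}) = A.1 := by
      rw [Set.insert_diff_singleton, Set.insert_eq_self.mpr h]
    have h2 : IsAntichain (· ≤ ·)
        (insert e ((⟨A.1 \ {e}, A.2.subset Set.diff_subset⟩ : AntichainSub P)).1) := by
      show IsAntichain (· ≤ ·) (insert e (A.1 \ {e})); rw [hins]; exact A.2
    rw [dif_pos h2]
    exact Subtype.ext hins
  · rw [dif_neg h]
    by_cases h2 : IsAntichain (· ≤ ·) (insert e A.1)
    · rw [dif_pos h2]
      have hme : e ∈ (⟨insert e A.1, h2⟩ : AntichainSub P).1 := Set.mem_insert e A.1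
      rw [dif_pos hme]
      have hdel : (insert e A.1) \ {e} = A.1 := by
        rw [Set.insert_diff_self_of_notMem h]
      exact Subtype.ext hdel
    · rw [dif_neg h2, dif_neg h, dif_neg h2]

noncomputable def togPerm (e : P) : Equiv.Perm (OrderIdealSub P) :=
  (togFun_involutive e).toPerm _

noncomputable def atogPerm (e : P) : Equiv.Perm (AntichainSub P) :=
  (atogFun_involutive e).toPerm _

def IsLinExtListOn (S : Set P) (l : List P) : Prop :=
  l.Nodup ∧ (∀ x : P, x ∈ l ↔ x ∈ S) ∧
    ∀ i j : Fin l.length, l.get i < l.get j → (i : ℕ) < (j : ℕ)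

noncomputable def RowJ (I : OrderIdealSub P) : OrderIdealSub P :=
  ⟨{x | ∃ m, (m ∉ I.1 ∧ ∀ z, z ∉ I.1 → z ≤ m → z = m) ∧ x ≤ m}, fun _a _b hba ha => by
    obtain ⟨m, hm, h⟩ := ha
    exact ⟨m, hm, hba.trans h⟩⟩

noncomputable def RowA (A : AntichainSub P) : AntichainSub P :=
  ⟨{x | x ∉ (idealOf A).1 ∧ ∀ z, z ∉ (idealOf A).1 → z ≤ x → z = x}, by
    intro a ha b hb hne hab
    exact hne (hb.2 a ha.1 hab)⟩

section RowmotionProof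

variable {P : Type*} [PartialOrder P]

def midSet (I : OrderIdealSub P) (T : Set P) : Set P :=
  (I.1 ∩ T) ∪ ((RowJ I).1 \ T)

lemma midSet_lower (I : OrderIdealSub P) (T : Set P)
    (hT : ∀ ⦃a b : P⦄, a ∈ T → b < a → b ∈ T) :
    IsLowerSet (midSet I T) := by
  intro a b hba ha
  rcases ha with ⟨haI, haT⟩ | ⟨haR, haT⟩
  · rcases eq_or_lt_of_le hba with rfl | hlt
    · exact Or.inl ⟨haI, haT⟩
    · exact Or.inl ⟨I.2 hba haI, hT haT hlt⟩
  · have hbR : b ∈ (RowJ I).1 := (RowJ I).2 hba haR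
    by_cases hbT : b ∈ T
    · by_cases hbI : b ∈ I.1
      · exact Or.inl ⟨hbI, hbT⟩
      · obtain ⟨m, ⟨hmI, hmin⟩, ham⟩ := haR
        have hbm : b = m := hmin b hbI (hba.trans ham)
        have hab : a = b := le_antisymm (hbm ▸ ham) hba
        exact absurd (hab ▸ hbT) haT
    · exact Or.inr ⟨hbR, hbT⟩

lemma mem_midSet_union_singleton {I : OrderIdealSub P} {T : Set P} {e x : P} (hx : x ≠ e) :
    x ∈ midSet I (T ∪ {e}) ↔ x ∈ midSet I T := by
  have hTe : x ∈ T ∪ {e} ↔ x ∈ T := by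
    simp [Set.mem_union, Set.mem_singleton_iff, hx]
  simp only [midSet, Set.mem_union, Set.mem_inter_iff, Set.mem_diff, hTe]

lemma e_mem_midSet_union_singleton {I : OrderIdealSub P} {T : Set P} {e : P} :
    e ∈ midSet I (T ∪ {e}) ↔ e ∈ I.1 := by
  simp [midSet, Set.mem_union]

lemma e_mem_midSet {I : OrderIdealSub P} {T : Set P} {e : P} (he : e ∉ T) :
    e ∈ midSet I T ↔ e ∈ (RowJ I).1 := by
  constructor
  · rintro (⟨_, hT⟩ | ⟨h, _⟩)
    · exact absurd hT he
    · exact h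
  · intro h
    exact Or.inr ⟨h, he⟩

lemma togFun_midSet [Fintype P] (I : OrderIdealSub P) (T : Set P) (e : P)
    (he : e ∉ T)
    (hlo : ∀ b, b < e → b ∈ T) (hhi : ∀ a, e < a → a ∉ T)
    (h1 : IsLowerSet (midSet I (T ∪ {e}))) (h2 : IsLowerSet (midSet I T)) :
    togFun e ⟨midSet I (T ∪ {e}), h1⟩ = ⟨midSet I T, h2⟩ := by
  by_cases heI : e ∈ I.1 <;> by_cases heR : e ∈ (RowJ I).1
  · -- e ∈ I, e ∈ RowJ : toggle is identity, sets already equal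
    have heJ : e ∈ midSet I (T ∪ {e}) := e_mem_midSet_union_singleton.mpr heI
    obtain ⟨m, ⟨hmI, hmin⟩, hem⟩ := heR
    have hem' : e < m := lt_of_le_of_ne hem (fun h => hmI (h ▸ heI))
    have hmJ : m ∈ midSet I (T ∪ {e}) := by
      refine Or.inr ⟨⟨m, ⟨hmI, hmin⟩, le_refl m⟩, ?_⟩
      rintro (hmT | rfl)
      · exact hhi m hem' hmT
      · exact lt_irrefl _ hem'
    have hnl : ¬ IsLowerSet (midSet I (T ∪ {e}) \ {e}) := by
      intro hls
      have h3 := hls hem ⟨hmJ, fun h => (lt_irrefl e (h ▸ hem'))⟩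
      exact h3.2 rfl
    unfold togFun
    rw [dif_pos heJ, dif_neg hnl]
    refine Subtype.ext ?_
    ext x
    by_cases hx : x = e
    · subst hx
      simp only [heJ, true_iff]
      exact (e_mem_midSet he).mpr ⟨m, ⟨hmI, hmin⟩, hem⟩
    · exact mem_midSet_union_singleton hx
  · -- e ∈ I, e ∉ RowJ : toggle removes e
    have heJ : e ∈ midSet I (T ∪ {e}) := e_mem_midSet_union_singleton.mpr heI
    have hls : IsLowerSet (midSet I (T ∪ {e}) \ {e}) := by
      intro a b hba hb
      obtain ⟨haJ, hane⟩ := hb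
      refine ⟨h1 hba haJ, ?_⟩
      intro hbe
      have hbe' : b = e := hbe
      have hlt : e < a := lt_of_le_of_ne (hbe' ▸ hba) (fun h => hane h.symm)
      have haT : a ∉ T ∪ {e} := by
        intro h
        rcases h with haT | hae
        · exact hhi a hlt haT
        · exact hane hae
      rcases haJ with ⟨_, haT'⟩ | ⟨haR, _⟩
      · exact haT haT'
      · obtain ⟨m, hm, ham⟩ := haR
        exact heR ⟨m, hm, hlt.le.trans ham⟩
    unfold togFun
    rw [dif_pos heJ, dif_pos hls]
    refine Subtype.ext ?_
    ext x
    by_cases hx : x = e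
    · subst hx
      constructor
      · rintro ⟨_, hxe⟩
        exact absurd rfl hxe
      · intro hc
        exact absurd ((e_mem_midSet he).mp hc) heR
    · constructor
      · rintro ⟨hxJ, _⟩
        exact (mem_midSet_union_singleton hx).mp hxJ
      · intro hxJ
        exact ⟨(mem_midSet_union_singleton hx).mpr hxJ, hx⟩
  · -- e ∉ I, e ∈ RowJ : toggle inserts e
    have heNJ : e ∉ midSet I (T ∪ {e}) := fun h => heI (e_mem_midSet_union_singleton.mp h)
    obtain ⟨m, ⟨hmI, hmin⟩, hem⟩ := heR
    have heq : m = e := (hmin e heI hem).symm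
    rw [heq] at hmI hmin
    have hls : IsLowerSet (insert e (midSet I (T ∪ {e}))) := by
      intro a b hba ha
      rcases ha with rfl | haJ
      · rcases eq_or_lt_of_le hba with rfl | hlt
        · exact Set.mem_insert _ _
        · have hbI : b ∈ I.1 := by
            by_contra hbI
            exact absurd (hmin b hbI hba) (ne_of_lt hlt)
          exact Set.mem_insert_iff.mpr (Or.inr (Or.inl ⟨hbI, Or.inl (hlo b hlt)⟩))
      · exact Set.mem_insert_iff.mpr (Or.inr (h1 hba haJ))
    unfold togFun
    rw [dif_neg heNJ, dif_pos hls]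
    refine Subtype.ext ?_
    ext x
    by_cases hx : x = e
    · subst hx
      simp only [Set.mem_insert_iff, true_or, true_iff]
      exact (e_mem_midSet he).mpr ⟨x, ⟨hmI, hmin⟩, le_refl x⟩
    · simp only [Set.mem_insert_iff, hx, false_or]
      exact mem_midSet_union_singleton hx
  · -- e ∉ I, e ∉ RowJ : toggle is identity, sets already equal
    have heNJ : e ∉ midSet I (T ∪ {e}) := fun h => heI (e_mem_midSet_union_singleton.mp h)
    obtain ⟨b, ⟨hbI, hbe⟩, hbmin⟩ :=
      (by
        obtain ⟨b, hb, hmin⟩ := Set.Finite.exists_minimalFor id {z | z ∉ I.1 ∧ z ≤ e} (Set.toFinite _) ⟨e, heI, le_refl e⟩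
        exact ⟨b, hb, fun a' ha' h => le_antisymm (hmin ha' h) h⟩ :
        ∃ b ∈ {z | z ∉ I.1 ∧ z ≤ e}, ∀ z ∈ {z | z ∉ I.1 ∧ z ≤ e}, z ≤ b → b = z)
    have hbglobal : ∀ z, z ∉ I.1 → z ≤ b → z = b := fun z hz hzb =>
      (hbmin z ⟨hz, hzb.trans hbe⟩ hzb).symm
    have hbR : b ∈ (RowJ I).1 := ⟨b, ⟨hbI, hbglobal⟩, le_refl b⟩
    have hbne : b ≠ e := fun h => heR (h ▸ hbR)
    have hblt : b < e := lt_of_le_of_ne hbe hbne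
    have hbNJ : b ∉ insert e (midSet I (T ∪ {e})) := by
      intro h
      rcases Set.mem_insert_iff.mp h with rfl | h
      · exact hbne rfl
      rcases h with ⟨hb, _⟩ | ⟨_, hbT⟩
      · exact hbI hb
      · exact hbT (Or.inl (hlo b hblt))
    have hnl : ¬ IsLowerSet (insert e (midSet I (T ∪ {e}))) := fun hls =>
      hbNJ (hls hbe (Set.mem_insert _ _))
    unfold togFun
    rw [dif_neg heNJ, dif_neg hnl]
    refine Subtype.ext ?_
    ext x
    by_cases hx : x = e
    · subst hx
      simp only [heNJ, false_iff]
      intro hc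
      exact heR ((e_mem_midSet he).mp hc)
    · exact mem_midSet_union_singleton hx

lemma listComp_drop [Fintype P] (l : List P) (hnd : l.Nodup)
    (hmem : ∀ x : P, x ∈ l)
    (hord : ∀ a b : P, a < b → l.idxOf a < l.idxOf b)
    (I : OrderIdealSub P) :
    ∀ k n, n + k = l.length →
      listComp ((l.drop n).map togFun) I =
        ⟨midSet I {x | l.idxOf x < n},
          midSet_lower I _ (fun a b ha hba => lt_trans (hord b a hba) ha)⟩ := by
  intro k
  induction k with
  | zero =>
    intro n hn
    rw [Nat.add_zero] at hn
    subst hn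
    rw [List.drop_length]
    refine Subtype.ext ?_
    show I.1 = midSet I {x | l.idxOf x < l.length}
    ext x
    have hx : l.idxOf x < l.length := List.idxOf_lt_length_iff.mpr (hmem x)
    constructor
    · intro h; exact Or.inl ⟨h, hx⟩
    · rintro (⟨h, _⟩ | ⟨_, hT⟩)
      · exact h
      · exact absurd hx hT
  | succ k ih =>
    intro n hn
    have hlt : n < l.length := by omega
    set e := l.get ⟨n, hlt⟩ with he_def
    have hidx : l.idxOf e = n := by
      have h3 := List.Nodup.idxOf_getElem hnd n hlt
      simpa [he_def, List.get_eq_getElem] using h3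
    have hdrop : l.drop n = e :: l.drop (n + 1) := by
      rw [List.drop_eq_getElem_cons hlt]
      rfl
    have hTeq : {x : P | l.idxOf x < n + 1} = {x : P | l.idxOf x < n} ∪ {e} := by
      ext x
      simp only [Set.mem_setOf_eq, Set.mem_union, Set.mem_singleton_iff]
      constructor
      · intro h
        rcases Nat.lt_succ_iff_lt_or_eq.mp h with h' | h'
        · exact Or.inl h'
        · right
          have h4 : l.get ⟨l.idxOf x, List.idxOf_lt_length_iff.mpr (hmem x)⟩ = x :=
            List.idxOf_get _
          rw [← h4]
          congr 1
          exact Fin.ext h'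
      · rintro (h | rfl)
        · exact Nat.lt_succ_of_lt h
        · rw [hidx]; exact Nat.lt_succ_self n
    have ih' := ih (n + 1) (by omega)
    rw [hdrop, List.map_cons]
    show togFun e (listComp ((l.drop (n + 1)).map togFun) I) = _
    rw [ih']
    have h1 : IsLowerSet (midSet I ({x : P | l.idxOf x < n} ∪ {e})) := by
      rw [← hTeq]
      exact midSet_lower I _ (fun a b ha hba => lt_trans (hord b a hba) ha)
    have hsub : (⟨midSet I {x : P | l.idxOf x < n + 1},
        midSet_lower I _ (fun a b ha hba => lt_trans (hord b a hba) ha)⟩ : OrderIdealSub P) =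
        ⟨midSet I ({x : P | l.idxOf x < n} ∪ {e}), h1⟩ := by
      refine Subtype.ext ?_
      show midSet I {x : P | l.idxOf x < n + 1} = midSet I ({x : P | l.idxOf x < n} ∪ {e})
      exact congrArg (midSet I) hTeq
    rw [hsub]
    exact togFun_midSet I _ e
      (fun h => by rw [Set.mem_setOf_eq, hidx] at h; omega)
      (fun b hb => by
        have h5 := hord b e hb
        rw [hidx] at h5
        exact h5)
      (fun a ha h => by
        rw [Set.mem_setOf_eq] at h
        have h6 := hord e a ha
        rw [hidx] at h6
        omega)
      h1 _

end RowmotionProof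

/-- Order ideal rowmotion is the composition of all the order ideal toggles,
in the order given by any linear extension. -/
theorem rowmotion_eq_comp_toggles_linear_extension
    (P : Type*) [PartialOrder P] [Fintype P]
    (l : List P) (hl : IsLinExtListOn Set.univ l) :
    RowJ (P := P) = listComp (l.map togFun) := by
  funext I
  obtain ⟨hnd, hmem, hord⟩ := hl
  have hmem' : ∀ x : P, x ∈ l := fun x => (hmem x).mpr (Set.mem_univ x)
  have hord' : ∀ a b : P, a < b → l.idxOf a < l.idxOf b := by
    intro a b hab
    have ha := List.idxOf_lt_length_iff.mpr (hmem' a)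
    have hb := List.idxOf_lt_length_iff.mpr (hmem' b)
    exact hord ⟨_, ha⟩ ⟨_, hb⟩ (by rw [List.idxOf_get, List.idxOf_get]; exact hab)
  have h := listComp_drop l hnd hmem' hord' I l.length 0 (by simp)
  rw [List.drop_zero] at h
  rw [h]
  refine Subtype.ext ?_
  ext x
  simp only [midSet, Set.mem_setOf_eq, Set.mem_union, Set.mem_inter_iff, Set.mem_diff]
  constructor
  · intro hx
    exact Or.inr ⟨hx, by omega⟩
  · rintro (⟨_, h0⟩ | ⟨hx, _⟩)
    · omega
    · exact hx
end

section
/- Let P be a finite graded poset and e ∈ P with rk(e) = i. Then τ_e^* = t_{rk=0} ∘ t_{rk=1} ∘ ⋯ ∘ t_{rk=i−1} ∘ t_e ∘ t_{rk=i−1} ∘ ⋯ ∘ t_{rk=1} ∘ t_{rk=0} and τ_{rk=i}^* = t_{rk=0} ∘ t_{rk=1} ∘ ⋯ ∘ t_{rk=i−1} ∘ t_{rk=i} ∘ t_{rk=i−1} ∘ ⋯ ∘ t_{rk=1} ∘ t_{rk=0}. -/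
open scoped Classical

variable {P : Type*} [PartialOrder P]

noncomputable def etaJPerm {P : Type*} [PartialOrder P] (l : List P) :
    Equiv.Perm (OrderIdealSub P) := (l.map togPerm).prod

lemma lower_diff_iff (I : OrderIdealSub P) (e : P) (he : e ∈ I.1) :
    IsLowerSet (I.1 \ {e}) ↔ ∀ y ∈ I.1, ¬ e < y := by
  constructor
  · intro h y hy hlt
    have hmem : y ∈ I.1 \ {e} := ⟨hy, fun hh => absurd (Set.mem_singleton_iff.1 hh) hlt.ne'⟩
    exact (h hlt.le hmem).2 rfl
  · intro hmax a b hba hb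
    refine ⟨I.2 hba hb.1, fun hh => ?_⟩
    have hbe : b = e := hh
    subst hbe
    exact hmax a hb.1 (lt_of_le_of_ne hba fun h => hb.2 h.symm)

lemma lower_insert_iff (I : OrderIdealSub P) (e : P) :
    IsLowerSet (insert e I.1) ↔ ∀ x, x < e → x ∈ I.1 := by
  constructor
  · intro h x hx
    have : x ∈ insert e I.1 := h hx.le (Set.mem_insert e I.1)
    rcases this with h1 | h1
    · exact absurd h1 hx.ne
    · exact h1
  · intro hlow a b hba hb
    rcases hb with rfl | hb
    · rcases eq_or_lt_of_le hba with rfl | h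
      · exact Set.mem_insert _ _
      · exact Set.mem_insert_of_mem _ (hlow _ h)
    · exact Set.mem_insert_of_mem _ (I.2 hba hb)

noncomputable def flipCond (e : P) (I : OrderIdealSub P) : Prop :=
  if e ∈ I.1 then ∀ y ∈ I.1, ¬ e < y else ∀ x, x < e → x ∈ I.1

lemma togFun_val (e : P) (I : OrderIdealSub P) :
    (togFun e I).1 =
      if flipCond e I then (if e ∈ I.1 then I.1 \ {e} else insert e I.1) else I.1 := by
  unfold togFun flipCond
  by_cases he : e ∈ I.1
  · simp only [he, dif_pos, if_pos]
    by_cases hf : ∀ y ∈ I.1, ¬ e < y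
    · rw [dif_pos ((lower_diff_iff I e he).2 hf), if_pos hf]
    · rw [dif_neg (fun hc => hf ((lower_diff_iff I e he).1 hc)), if_neg hf]
  · simp only [he, dif_neg, if_neg, not_false_iff]
    by_cases hf : ∀ x, x < e → x ∈ I.1
    · rw [dif_pos ((lower_insert_iff I e).2 hf), if_pos hf]
    · rw [dif_neg (fun hc => hf ((lower_insert_iff I e).1 hc)), if_neg hf]

lemma mem_togFun_of_ne {x e : P} (I : OrderIdealSub P) (hne : x ≠ e) :
    x ∈ (togFun e I).1 ↔ x ∈ I.1 := by
  rw [togFun_val]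
  split_ifs with h1 h2 <;>
    simp [Set.mem_diff, Set.mem_insert_iff, Set.mem_singleton_iff, hne]

lemma flipCond_togFun {a b : P} (h1 : ¬ a ≤ b) (h2 : ¬ b ≤ a) (I : OrderIdealSub P) :
    flipCond a (togFun b I) ↔ flipCond a I := by
  have hne : a ≠ b := fun h => h1 h.le
  have hmem : a ∈ (togFun b I).1 ↔ a ∈ I.1 := mem_togFun_of_ne I hne
  unfold flipCond
  by_cases ha : a ∈ I.1
  · rw [if_pos ha, if_pos (hmem.2 ha)]
    constructor
    · intro h y hy hlt
      have hyb : y ≠ b := fun hh => h1 (hh ▸ hlt.le)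
      exact h y ((mem_togFun_of_ne I hyb).2 hy) hlt
    · intro h y hy hlt
      have hyb : y ≠ b := fun hh => h1 (hh ▸ hlt.le)
      exact h y ((mem_togFun_of_ne I hyb).1 hy) hlt
  · rw [if_neg ha, if_neg (fun hc => ha (hmem.1 hc))]
    constructor
    · intro h x hx
      have hxb : x ≠ b := fun hh => h2 (hh ▸ hx.le)
      exact (mem_togFun_of_ne I hxb).1 (h x hx)
    · intro h x hx
      have hxb : x ≠ b := fun hh => h2 (hh ▸ hx.le)
      exact (mem_togFun_of_ne I hxb).2 (h x hx)

lemma togFun_comm {a b : P} (h1 : ¬ a ≤ b) (h2 : ¬ b ≤ a) (I : OrderIdealSub P) :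
    togFun a (togFun b I) = togFun b (togFun a I) := by
  have hne : a ≠ b := fun h => h1 h.le
  apply Subtype.ext
  rw [togFun_val a (togFun b I), togFun_val b (togFun a I),
    flipCond_togFun h1 h2 I, flipCond_togFun h2 h1 I,
    mem_togFun_of_ne I hne, mem_togFun_of_ne I hne.symm,
    togFun_val b I, togFun_val a I]
  split_ifs <;> (try rfl) <;>
    (ext x; by_cases hxa : x = a <;> by_cases hxb : x = b <;>
      simp_all [Set.mem_insert_iff, Set.mem_diff, Set.mem_singleton_iff])

@[simp] lemma togPerm_apply (e : P) (I : OrderIdealSub P) : togPerm e I = togFun e I := rfl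

lemma togPerm_inv (e : P) : (togPerm e)⁻¹ = togPerm e := rfl

lemma togPerm_commute {a b : P} (h1 : ¬ a ≤ b) (h2 : ¬ b ≤ a) :
    Commute (togPerm (P := P) a) (togPerm b) := by
  apply Equiv.ext
  intro I
  simp only [Equiv.Perm.mul_apply, togPerm_apply]
  exact togFun_comm h1 h2 I

lemma prod_erase_front {l : List P} {a : P}
    (hpw : l.Pairwise fun x y => ¬ y < x) (hmin : ∀ b ∈ l, ¬ b < a) (ha : a ∈ l) :
    (l.map togPerm).prod = togPerm a * ((l.erase a).map togPerm).prod := by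
  induction l with
  | nil => cases ha
  | cons b t ih =>
    rcases eq_or_ne b a with rfl | hba
    · rw [List.erase_cons_head, List.map_cons, List.prod_cons]
    · have hat : a ∈ t := by
        rcases List.mem_cons.1 ha with h | h
        · exact absurd h.symm hba
        · exact h
      have hnab : ¬ a < b := List.rel_of_pairwise_cons hpw hat
      have hnba : ¬ b < a := hmin b (List.mem_cons_self)
      have hc : Commute (togPerm b) (togPerm a) :=
        togPerm_commute (fun h => hnba (h.lt_of_ne hba))
          (fun h => hnab (h.lt_of_ne hba.symm))
      rw [List.erase_cons_tail (by simp [hba]), List.map_cons, List.map_cons,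
        List.prod_cons, List.prod_cons,
        ih hpw.of_cons (fun x hx => hmin x (List.mem_cons_of_mem _ hx)) hat,
        ← mul_assoc, ← mul_assoc, hc.eq]

lemma prod_eq_of_good {l : List P} : ∀ {l' : List P} {p : P → Prop},
    l.Nodup → (∀ x, x ∈ l ↔ p x) → (l.Pairwise fun x y => ¬ y < x) →
    l'.Nodup → (∀ x, x ∈ l' ↔ p x) → (l'.Pairwise fun x y => ¬ y < x) →
    (l.map togPerm).prod = (l'.map togPerm).prod := by
  induction l with
  | nil =>
    intro l' p _ hm _ _ hm' _
    have h0 : l' = [] := List.eq_nil_iff_forall_not_mem.2 fun x hx =>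
      List.not_mem_nil ((hm x).2 ((hm' x).1 hx))
    simp [h0]
  | cons a t ih =>
    intro l' p hnd hm hpw hnd' hm' hpw'
    have hpa : p a := (hm a).1 (List.mem_cons_self)
    have hal' : a ∈ l' := (hm' a).2 hpa
    have hminP : ∀ b, p b → ¬ b < a := by
      intro b hpb hlt
      rcases List.mem_cons.1 ((hm b).2 hpb) with h | h
      · exact absurd hlt (h ▸ lt_irrefl a)
      · exact List.rel_of_pairwise_cons hpw h hlt
    have h1 : (l'.map togPerm).prod = togPerm a * ((l'.erase a).map togPerm).prod :=
      prod_erase_front hpw' (fun b hb => hminP b ((hm' b).1 hb)) hal'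
    have hant : a ∉ t := (List.nodup_cons.1 hnd).1
    have ht : (t.map togPerm).prod = ((l'.erase a).map togPerm).prod := by
      refine ih (p := fun x => p x ∧ x ≠ a) (List.nodup_cons.1 hnd).2 ?_ hpw.of_cons
        (hnd'.erase a) ?_ (hpw'.sublist (List.erase_sublist))
      · intro x
        constructor
        · intro hx
          exact ⟨(hm x).1 (List.mem_cons_of_mem _ hx), fun h => hant (h ▸ hx)⟩
        · intro hx
          rcases List.mem_cons.1 ((hm x).2 hx.1) with h | h
          · exact absurd h hx.2
          · exact h
      · intro x
        rw [hnd'.mem_erase_iff]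
        constructor
        · intro hx
          exact ⟨(hm' x).1 hx.2, hx.1⟩
        · intro hx
          exact ⟨hx.2, (hm' x).2 hx.1⟩
    rw [List.map_cons, List.prod_cons, h1, ht]

lemma rk_lt_of_lt {P : Type*} [PartialOrder P] [Fintype P] (rk : P → ℕ)
    (hrkcov : ∀ x y : P, x ⋖ y → rk y = rk x + 1) :
    ∀ {x y : P}, x < y → rk x < rk y := by
  suffices h : ∀ x : P, ∀ y, x < y → rk x < rk y by exact fun {x y} => h x y
  intro x
  induction x using (wellFounded_gt (α := P)).induction with
  | _ x ih =>
    intro y hxy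
    obtain ⟨z, hz, hzy⟩ := exists_covBy_le_of_lt hxy
    have hrz : rk z = rk x + 1 := hrkcov x z hz
    rcases hzy.eq_or_lt with rfl | hlt
    · omega
    · have := ih z hz.lt y hlt
      omega

lemma conj_mul_of_commute {G : Type*} [Group G] {η μ t : G} (h : μ * t * μ⁻¹ = t) :
    η * t * η⁻¹ = (η * μ) * t * (η * μ)⁻¹ := by
  rw [mul_inv_rev]
  calc η * t * η⁻¹ = η * (μ * t * μ⁻¹) * η⁻¹ := by rw [h]
    _ = η * μ * t * (μ⁻¹ * η⁻¹) := by group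

lemma prod_map_inv_eq {l : List P}
    (h : ∀ x ∈ l, ∀ y ∈ l, x ≠ y → ¬ x ≤ y) :
    ((l.map togPerm).prod)⁻¹ = (l.map togPerm).prod := by
  rw [List.prod_inv_reverse]
  have h2 : (l.map togPerm).map (fun x => x⁻¹) = l.map togPerm := by
    rw [List.map_map]
    exact List.map_congr_left fun x _ => togPerm_inv x
  rw [h2]
  refine (List.Perm.prod_eq' ((l.map togPerm).reverse_perm).symm ?_).symm
  refine List.pairwise_of_forall_mem_list ?_
  intro g hg k hk
  obtain ⟨x, hx, rfl⟩ := List.mem_map.1 hg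
  obtain ⟨y, hy, rfl⟩ := List.mem_map.1 hk
  rcases eq_or_ne x y with rfl | hxy
  · exact Commute.refl _
  · exact togPerm_commute (h x hx y hy hxy) (h y hy x hx hxy.symm)

lemma key_conj {P : Type*} [PartialOrder P] [Fintype P] (rk : P → ℕ)
    (hrkcov : ∀ x y : P, x ⋖ y → rk y = rk x + 1)
    (L : ℕ → List P) (hL : ∀ i, (L i).Nodup ∧ ∀ x : P, x ∈ L i ↔ rk x = i)
    (lext : P → List P) (hlext : ∀ x : P, IsLinExtListOn {z : P | z < x} (lext x))
    (e : P) :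
    etaJPerm (lext e) * togPerm e * (etaJPerm (lext e))⁻¹
      = ((List.range (rk e)).map fun j => etaJPerm (L j)).prod * togPerm e *
          (((List.range (rk e)).map fun j => etaJPerm (L j)).prod)⁻¹ := by
  obtain ⟨hndE, hmemE, hfinE⟩ := hlext e
  have hmemE' : ∀ x, x ∈ lext e ↔ x < e := fun x => hmemE x
  have hpwE : (lext e).Pairwise fun x y => ¬ y < x := by
    rw [List.pairwise_iff_get]
    intro a b hab hlt
    have h1 : (b : ℕ) < (a : ℕ) := hfinE b a hlt
    have h2 : (a : ℕ) < (b : ℕ) := hab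
    omega
  set i := rk e with hi
  set FL := ((List.range i).map L).flatten with hFL
  have hLnd : ∀ j, (L j).Nodup := fun j => (hL j).1
  have hLmem : ∀ j (x : P), x ∈ L j ↔ rk x = j := fun j => (hL j).2
  have hrklt : ∀ {x y : P}, x < y → rk x < rk y := rk_lt_of_lt rk hrkcov
  have hFLmem : ∀ x, x ∈ FL ↔ rk x < i := by
    intro x
    simp only [hFL, List.mem_flatten, List.mem_map, List.mem_range]
    constructor
    · rintro ⟨l, ⟨j, hj, rfl⟩, hx⟩
      have := (hLmem j x).1 hx
      omega
    · intro h
      exact ⟨L (rk x), ⟨rk x, h, rfl⟩, (hLmem _ x).2 rfl⟩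
  have hFLpw : FL.Pairwise fun x y => ¬ y < x := by
    rw [hFL, List.pairwise_flatten]
    constructor
    · rintro l hl
      obtain ⟨j, hj, rfl⟩ := List.mem_map.1 hl
      refine List.pairwise_of_forall_mem_list ?_
      intro x hx y hy hlt
      have h1 := (hLmem j x).1 hx
      have h2 := (hLmem j y).1 hy
      have := hrklt hlt
      omega
    · refine List.pairwise_map.2 (((List.pairwise_lt_range).imp ?_))
      intro j k hjk x hx y hy hlt
      have h1 := (hLmem j x).1 hx
      have h2 := (hLmem k y).1 hy
      have := hrklt hlt
      omega
  have hFLnd : FL.Nodup := by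
    rw [hFL, List.nodup_flatten]
    constructor
    · rintro l hl
      obtain ⟨j, _, rfl⟩ := List.mem_map.1 hl
      exact hLnd j
    · refine List.pairwise_map.2 (((List.pairwise_lt_range).imp ?_))
      intro j k hjk x hxj hxk
      have h1 := (hLmem j x).1 hxj
      have h2 := (hLmem k x).1 hxk
      omega
  set m := FL.filter (fun x => !decide (x < e)) with hm
  have hmmem : ∀ x, x ∈ m ↔ (rk x < i ∧ ¬ x < e) := by
    intro x
    rw [hm, List.mem_filter]
    simp [hFLmem x]
  have hmsub : m.Sublist FL := List.filter_sublist
  have hl2mem : ∀ x, x ∈ lext e ++ m ↔ rk x < i := by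
    intro x
    rw [List.mem_append, hmemE' x, hmmem x]
    constructor
    · rintro (h | h)
      · exact hrklt h
      · exact h.1
    · intro h
      by_cases hx : x < e
      · exact Or.inl hx
      · exact Or.inr ⟨h, hx⟩
  have hl2nd : (lext e ++ m).Nodup := by
    rw [List.nodup_append]
    exact ⟨hndE, hmsub.nodup hFLnd,
      fun x hx y hy hxy => by subst hxy; exact ((hmmem x).1 hy).2 ((hmemE' x).1 hx)⟩
  have hl2pw : (lext e ++ m).Pairwise fun x y => ¬ y < x := by
    rw [List.pairwise_append]
    refine ⟨hpwE, hFLpw.sublist hmsub, ?_⟩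
    intro x hx y hy hlt
    exact ((hmmem y).1 hy).2 (hlt.trans ((hmemE' x).1 hx))
  have hQ : ((List.range i).map fun j => etaJPerm (L j)).prod = (FL.map togPerm).prod := by
    simp only [etaJPerm, hFL, List.map_flatten, List.prod_flatten, List.map_map]
    rfl
  have hsplit : (FL.map togPerm).prod
      = etaJPerm (lext e) * (m.map togPerm).prod := by
    rw [prod_eq_of_good (p := fun x => rk x < i) hFLnd hFLmem hFLpw hl2nd hl2mem hl2pw,
      List.map_append, List.prod_append]
    rfl
  have hcomm : Commute ((m.map togPerm).prod) (togPerm e) := by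
    refine Commute.list_prod_left _ _ ?_
    intro g hg
    obtain ⟨x, hx, rfl⟩ := List.mem_map.1 hg
    obtain ⟨hx1, hx2⟩ := (hmmem x).1 hx
    refine togPerm_commute ?_ ?_
    · intro hle
      rcases hle.eq_or_lt with rfl | h
      · omega
      · exact hx2 h
    · intro hle
      rcases hle.eq_or_lt with rfl | h
      · omega
      · have := hrklt h
        omega
  rw [hQ, hsplit]
  refine conj_mul_of_commute ?_
  rw [hcomm.eq, mul_inv_cancel_right]

lemma Qrev_eq {P : Type*} [PartialOrder P] [Fintype P] (rk : P → ℕ)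
    (hrkcov : ∀ x y : P, x ⋖ y → rk y = rk x + 1)
    (L : ℕ → List P) (hL : ∀ i, (L i).Nodup ∧ ∀ x : P, x ∈ L i ↔ rk x = i)
    (i : ℕ) :
    ((List.range i).reverse.map fun j => etaJPerm (L j)).prod
      = (((List.range i).map fun j => etaJPerm (L j)).prod)⁻¹ := by
  have hrklt : ∀ {x y : P}, x < y → rk x < rk y := rk_lt_of_lt rk hrkcov
  have hinv : ∀ j, (etaJPerm (L j) : Equiv.Perm (OrderIdealSub P))⁻¹ = etaJPerm (L j) := by
    intro j
    refine prod_map_inv_eq ?_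
    intro x hx y hy hxy hle
    have h1 := ((hL j).2 x).1 hx
    have h2 := ((hL j).2 y).1 hy
    have := hrklt (hle.lt_of_ne hxy)
    omega
  have h2 : (((List.range i).map fun j => etaJPerm (L j)).map fun x => x⁻¹)
      = (List.range i).map fun j => etaJPerm (L j) := by
    rw [List.map_map]
    exact List.map_congr_left fun j _ => hinv j
  rw [List.prod_inv_reverse, h2, List.map_reverse]

/-- In a finite graded poset, for `e` of rank `i`:
`τ_e^* = t_{rk=0} ∘ ⋯ ∘ t_{rk=i-1} ∘ t_e ∘ t_{rk=i-1} ∘ ⋯ ∘ t_{rk=0}` and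
`τ_{rk=i}^* = t_{rk=0} ∘ ⋯ ∘ t_{rk=i-1} ∘ t_{rk=i} ∘ t_{rk=i-1} ∘ ⋯ ∘ t_{rk=0}`.
Here `τ_e^* = η_e t_e η_e⁻¹` with `η_e` the composition of toggles over a linear
extension `lext e` of `{x | x < e}`, `L j` enumerates the elements of rank `j`, and
`τ_{rk=i}^*` is the product of the `τ_x^*` over elements `x` of rank `i`. -/
theorem tauStar_eq_rank_toggle_conj
    (P : Type*) [PartialOrder P] [Fintype P] (rk : P → ℕ) (r : ℕ)
    (hrk0 : ∀ x : P, IsMin x → rk x = 0)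
    (hrkcov : ∀ x y : P, x ⋖ y → rk y = rk x + 1)
    (hrkmax : ∀ x : P, IsMax x → rk x = r)
    (L : ℕ → List P) (hL : ∀ i, (L i).Nodup ∧ ∀ x : P, x ∈ L i ↔ rk x = i)
    (lext : P → List P) (hlext : ∀ x : P, IsLinExtListOn {z : P | z < x} (lext x))
    (e : P) :
    (etaJPerm (lext e) * togPerm e * (etaJPerm (lext e))⁻¹
      = ((List.range (rk e)).map fun j => etaJPerm (L j)).prod * togPerm e *
          ((List.range (rk e)).reverse.map fun j => etaJPerm (L j)).prod) ∧
    ((L (rk e)).map fun x =>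
        etaJPerm (lext x) * togPerm x * (etaJPerm (lext x))⁻¹).prod
      = ((List.range (rk e)).map fun j => etaJPerm (L j)).prod * etaJPerm (L (rk e)) *
          ((List.range (rk e)).reverse.map fun j => etaJPerm (L j)).prod := by
  have hQrev := Qrev_eq rk hrkcov L hL (rk e)
  constructor
  · rw [hQrev]
    exact key_conj rk hrkcov L hL lext hlext e
  · set Q := ((List.range (rk e)).map fun j => etaJPerm (L j)).prod with hQ
    have hx : ∀ x ∈ L (rk e), (etaJPerm (lext x) * togPerm x * (etaJPerm (lext x))⁻¹)
        = (MulAut.conj Q) (togPerm x) := by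
      intro x hxm
      have hr : rk x = rk e := ((hL (rk e)).2 x).1 hxm
      rw [MulAut.conj_apply]
      have h := key_conj rk hrkcov L hL lext hlext x
      rw [hr] at h
      exact h
    rw [List.map_congr_left hx, hQrev]
    calc ((L (rk e)).map fun x => (MulAut.conj Q) (togPerm x)).prod
        = (((L (rk e)).map togPerm).map (MulAut.conj Q)).prod := by
          rw [List.map_map]; rfl
      _ = (MulAut.conj Q) (((L (rk e)).map togPerm).prod) := (map_list_prod _ _).symm
      _ = Q * etaJPerm (L (rk e)) * Q⁻¹ := by rw [MulAut.conj_apply]; rfl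
end
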